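/- Theorem 1, case σ = 0 (weak solution exists): Suppose Assumptions 1, 2 and 3 hold, and run the OptDE algorithm with σ = 0 for K ≥ 1 iterations. Then the returned best iterate w̃_K satisfies, for every D > 0, sup{ ⟨F(w̃_K), w̃_K − w⟩ : w ∈ 𝒲, ‖w̃_K − w‖ ≤ D } ≤ C_0 D ‖w_0 − w*‖ √(L / (A_{K−1} + a_1)), where C_0 = (1 + δ/(αγ)) √(8α/γ), a_1 = αγ/L, A_{K−1} = αγ(K−1)/L, and w* is the weak solution from Assumption 3. -/

import Mathlib

open scoped RealInnerProductSpace
open Finset MeasureTheory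

set_option maxHeartbeats 1000000

/-- `Vec d` is the ambient space `ℝ^d` with its standard inner product. -/
abbrev Vec (d : ℕ) := EuclideanSpace ℝ (Fin d)

/-- The dual norm `‖y‖_* = sup_{nrm x ≤ 1} ⟪x, y⟫` of a (general) norm `nrm` on `ℝ^d`. -/
noncomputable def dualNorm {d : ℕ} (nrm : Vec d → ℝ) (y : Vec d) : ℝ :=
  sSup ((fun x => (⟪x, y⟫ : ℝ)) '' {x | nrm x ≤ 1})

/-- The Bregman divergence `V_v(w) = ½‖w‖² − ½‖v‖² − ⟪∇½‖v‖², w − v⟫` of `½ nrm²`,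
where `g` is the gradient map of `½ nrm²`. -/
noncomputable def breg {d : ℕ} (nrm : Vec d → ℝ) (g : Vec d → Vec d) (v w : Vec d) : ℝ :=
  nrm w ^ 2 / 2 - nrm v ^ 2 / 2 - ⟪g v, w - v⟫

/-! ### Auxiliary machinery -/

/-- A bundled general norm on `ℝ^d`. -/
structure NP (d : ℕ) where
  n : Vec d → ℝ
  pos : ∀ x : Vec d, x ≠ 0 → 0 < n x
  addle : ∀ x y, n (x + y) ≤ n x + n y
  smul : ∀ (c : ℝ) (x : Vec d), n (c • x) = |c| * n x

namespace NP
variable {d : ℕ} (N : NP d)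

lemma zero : N.n 0 = 0 := by simpa using N.smul 0 0

lemma nonneg (x : Vec d) : 0 ≤ N.n x := by
  rcases eq_or_ne x 0 with h | h
  · simp [h, N.zero]
  · exact (N.pos x h).le

lemma neg (x : Vec d) : N.n (-x) = N.n x := by simpa using N.smul (-1) x

lemma sub_comm (x y : Vec d) : N.n (x - y) = N.n (y - x) := by
  rw [← N.neg (x - y), neg_sub]

lemma sum_le {ι : Type*} (s : Finset ι) (f : ι → Vec d) :
    N.n (∑ i ∈ s, f i) ≤ ∑ i ∈ s, N.n (f i) := by
  classical
  induction s using Finset.cons_induction with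
  | empty => simp [N.zero]
  | cons i s hi ih =>
    rw [Finset.sum_cons, Finset.sum_cons]
    exact (N.addle _ _).trans (by linarith)

lemma upper : ∃ C : ℝ, 0 ≤ C ∧ ∀ x : Vec d, N.n x ≤ C * ‖x‖ := by
  classical
  refine ⟨∑ i : Fin d, N.n (EuclideanSpace.single i (1:ℝ)),
    Finset.sum_nonneg fun i _ => N.nonneg _, fun x => ?_⟩
  have hx : ∑ i, x i • EuclideanSpace.single i (1:ℝ) = x := by
    have := (EuclideanSpace.basisFun (Fin d) ℝ).sum_repr x
    simpa [EuclideanSpace.basisFun_apply, EuclideanSpace.basisFun_repr] using this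
  calc N.n x = N.n (∑ i, x i • EuclideanSpace.single i (1:ℝ)) := by rw [hx]
    _ ≤ ∑ i, N.n (x i • EuclideanSpace.single i (1:ℝ)) := N.sum_le _ _
    _ = ∑ i, |x i| * N.n (EuclideanSpace.single i (1:ℝ)) := by
        simp [N.smul]
    _ ≤ ∑ i, ‖x‖ * N.n (EuclideanSpace.single i (1:ℝ)) := by
        refine Finset.sum_le_sum fun i _ => ?_
        refine mul_le_mul_of_nonneg_right ?_ (N.nonneg _)
        have h := abs_real_inner_le_norm (EuclideanSpace.single i (1:ℝ)) x
        simpa [EuclideanSpace.inner_single_left, EuclideanSpace.norm_single] using h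
    _ = (∑ i : Fin d, N.n (EuclideanSpace.single i (1:ℝ))) * ‖x‖ := by
        rw [Finset.sum_mul]
        exact Finset.sum_congr rfl fun i _ => mul_comm _ _

lemma continuous : Continuous N.n := by
  obtain ⟨C, hC0, hC⟩ := N.upper
  have : LipschitzWith (Real.toNNReal C) N.n := by
    refine LipschitzWith.of_dist_le_mul fun x y => ?_
    have h1 : N.n x - N.n y ≤ N.n (x - y) := by
      have := N.addle (x - y) y; simpa using this
    have h2 : N.n y - N.n x ≤ N.n (x - y) := by
      have := N.addle (y - x) x
      rw [N.sub_comm y x] at *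
      simpa using this
    have h3 : N.n (x - y) ≤ C * ‖x - y‖ := hC _
    rw [Real.dist_eq, dist_eq_norm, Real.coe_toNNReal C hC0]
    rw [abs_le]
    constructor <;> nlinarith [norm_nonneg (x - y)]
  exact this.continuous

lemma lower : ∃ m : ℝ, 0 < m ∧ ∀ x : Vec d, m * ‖x‖ ≤ N.n x := by
  by_cases hne : (Metric.sphere (0 : Vec d) 1).Nonempty
  · obtain ⟨x₀, hx₀, hmin⟩ := (isCompact_sphere (0 : Vec d) 1).exists_isMinOn hne
      (N.continuous.continuousOn)
    have hx₀1 : ‖x₀‖ = 1 := by simpa using hx₀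
    have hm0 : 0 < N.n x₀ := N.pos x₀ (by intro h; rw [h] at hx₀1; simp at hx₀1)
    refine ⟨N.n x₀, hm0, fun x => ?_⟩
    rcases eq_or_ne x 0 with rfl | hx
    · simp [N.zero]
    · have hnx : (0:ℝ) < ‖x‖ := norm_pos_iff.2 hx
      have hmem : ‖x‖⁻¹ • x ∈ Metric.sphere (0 : Vec d) 1 := by
        simp [norm_smul, abs_of_pos (inv_pos.2 hnx), inv_mul_cancel₀ hnx.ne']
      have h2 : N.n (‖x‖⁻¹ • x) = ‖x‖⁻¹ * N.n x := by
        rw [N.smul, abs_of_pos (inv_pos.2 hnx)]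
      have h3 : N.n x₀ ≤ ‖x‖⁻¹ * N.n x := by
        have := hmin hmem; simpa [h2] using this
      calc N.n x₀ * ‖x‖ ≤ (‖x‖⁻¹ * N.n x) * ‖x‖ :=
            mul_le_mul_of_nonneg_right h3 hnx.le
        _ = N.n x := by field_simp
  · refine ⟨1, one_pos, fun x => ?_⟩
    rcases eq_or_ne x 0 with rfl | hx
    · simp [N.zero]
    · exact absurd ⟨‖x‖⁻¹ • x, by
        simp [norm_smul, abs_of_pos (inv_pos.2 (norm_pos_iff.2 hx)),
          inv_mul_cancel₀ (norm_pos_iff.2 hx).ne']⟩ hne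

lemma bddAbove (y : Vec d) :
    BddAbove ((fun x => (⟪x, y⟫ : ℝ)) '' {x | N.n x ≤ 1}) := by
  obtain ⟨m, hm0, hm⟩ := N.lower
  refine ⟨m⁻¹ * ‖y‖, ?_⟩
  rintro r ⟨x, hx, rfl⟩
  have h1 : ‖x‖ ≤ m⁻¹ := by
    rw [← mul_le_mul_iff_right₀ hm0]
    calc m * ‖x‖ ≤ N.n x := hm x
      _ ≤ 1 := hx
      _ = m * m⁻¹ := by field_simp
  calc (⟪x, y⟫ : ℝ) ≤ ‖x‖ * ‖y‖ := real_inner_le_norm x y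
    _ ≤ m⁻¹ * ‖y‖ := mul_le_mul_of_nonneg_right h1 (norm_nonneg y)

lemma dn_nonneg (y : Vec d) : 0 ≤ dualNorm N.n y :=
  le_csSup (N.bddAbove y) ⟨0, by simp [N.zero], by simp⟩

lemma cs (x y : Vec d) : (⟪x, y⟫ : ℝ) ≤ N.n x * dualNorm N.n y := by
  rcases eq_or_ne x 0 with rfl | hx
  · simpa [N.zero] using mul_nonneg (N.nonneg 0) (N.dn_nonneg y)
  · have hnx : 0 < N.n x := N.pos x hx
    have hmem : (N.n x)⁻¹ • x ∈ {z | N.n z ≤ 1} := by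
      simp only [Set.mem_setOf_eq, N.smul, abs_of_pos (inv_pos.2 hnx)]
      rw [inv_mul_cancel₀ hnx.ne']
    have h1 : (⟪(N.n x)⁻¹ • x, y⟫ : ℝ) ≤ dualNorm N.n y :=
      le_csSup (N.bddAbove y) ⟨_, hmem, rfl⟩
    rw [real_inner_smul_left] at h1
    calc (⟪x, y⟫ : ℝ) = N.n x * ((N.n x)⁻¹ * ⟪x, y⟫) := by field_simp
      _ ≤ N.n x * dualNorm N.n y := mul_le_mul_of_nonneg_left h1 hnx.le

lemma cs' (x y : Vec d) : (⟪y, x⟫ : ℝ) ≤ N.n x * dualNorm N.n y := by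
  rw [real_inner_comm]; exact N.cs x y

end NP

lemma helper1 (x L b c : ℝ) (hL : L ≠ 0) : x / L * (c * (L * b)) = x * b * c := by
  field_simp

open InnerProductSpace in
/-- First-order optimality condition (variational inequality) for the prox step. -/
lemma grad_VI {d : ℕ} (nrm : Vec d → ℝ) (γ : ℝ)
    (g : Vec d → Vec d)
    (hgrad : ∀ x : Vec d, HasGradientAt (fun v : Vec d => nrm v ^ 2 / 2) (g x) x)
    (W : Set (Vec d)) (hWcv : Convex ℝ W)
    (c p xs : Vec d) (hxs : xs ∈ W)
    (hmin : IsMinOn (fun x => (⟪c, x⟫ : ℝ) + 1 / (2 * γ) * nrm (x - p) ^ 2) W xs)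
    (u : Vec d) (hu : u ∈ W) :
    0 ≤ (⟪c, u - xs⟫ : ℝ) + (1 / γ) * ⟪g (xs - p), u - xs⟫ := by
  have ht : HasFDerivAt (fun x : Vec d => x - p) (ContinuousLinearMap.id ℝ (Vec d)) xs := by
    simpa using (hasFDerivAt_id xs).sub_const p
  have h2 : HasFDerivAt (fun x : Vec d => nrm (x - p) ^ 2 / 2)
      ((toDual ℝ (Vec d) (g (xs - p))).comp (ContinuousLinearMap.id ℝ (Vec d))) xs :=
    by have := ((hgrad (xs - p)).hasFDerivAt).comp xs ht; exact this
  have heq : (fun x => (⟪c, x⟫ : ℝ) + 1 / (2 * γ) * nrm (x - p) ^ 2)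
      = fun x => (⟪c, x⟫ : ℝ) + (1 / γ) * (nrm (x - p) ^ 2 / 2) := by
    funext x; ring
  have h3 : HasFDerivAt (fun x => (⟪c, x⟫ : ℝ) + 1 / (2 * γ) * nrm (x - p) ^ 2)
      ((innerSL ℝ c) + (1 / γ) • ((toDual ℝ (Vec d) (g (xs - p))).comp
        (ContinuousLinearMap.id ℝ (Vec d)))) xs := by
    rw [heq]
    exact ((innerSL ℝ c).hasFDerivAt (x := xs)).add (h2.const_mul (1 / γ))
  have hcone : u - xs ∈ posTangentConeAt W xs :=
    sub_mem_posTangentConeAt_of_segment_subset (hWcv.segment_subset hxs hu)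
  have hval := hmin.localize.hasFDerivWithinAt_nonneg h3.hasFDerivWithinAt hcone
  simpa [real_inner_smul_left, toDual_apply_apply] using hval

/-- Strong minimality inequality for the prox step. -/
lemma prox_strong_min {d : ℕ} (nrm : Vec d → ℝ) (γ : ℝ) (hγ0 : 0 < γ)
    (g : Vec d → Vec d)
    (hgrad : ∀ x : Vec d, HasGradientAt (fun v : Vec d => nrm v ^ 2 / 2) (g x) x)
    (hstrong : ∀ v x : Vec d,
      nrm v ^ 2 / 2 + ⟪g v, x - v⟫ + γ / 2 * nrm (x - v) ^ 2 ≤ nrm x ^ 2 / 2)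
    (W : Set (Vec d)) (hWcv : Convex ℝ W)
    (c p xs : Vec d) (hxs : xs ∈ W)
    (hmin : IsMinOn (fun x => (⟪c, x⟫ : ℝ) + 1 / (2 * γ) * nrm (x - p) ^ 2) W xs)
    (u : Vec d) (hu : u ∈ W) :
    (⟪c, xs⟫ : ℝ) + 1 / (2 * γ) * nrm (xs - p) ^ 2 + 1 / 2 * nrm (u - xs) ^ 2 ≤
      (⟪c, u⟫ : ℝ) + 1 / (2 * γ) * nrm (u - p) ^ 2 := by
  have hVI := grad_VI nrm γ g hgrad W hWcv c p xs hxs hmin u hu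
  have hs := hstrong (xs - p) (u - p)
  rw [sub_sub_sub_cancel_right] at hs
  rw [inner_sub_right] at hVI
  rw [← mul_le_mul_iff_right₀ hγ0]
  have hγ' : γ * (1 / γ) = 1 := by field_simp
  have hγ'' : γ * (1 / (2 * γ)) = 1 / 2 := by field_simp
  have hVI' : 0 ≤ γ * ((⟪c, u⟫:ℝ) - ⟪c, xs⟫) + ⟪g (xs - p), u - xs⟫ := by
    have := mul_le_mul_of_nonneg_left hVI hγ0.le
    calc (0:ℝ) = γ * 0 := by ring
      _ ≤ γ * ((⟪c, u⟫:ℝ) - ⟪c, xs⟫ + 1 / γ * ⟪g (xs - p), u - xs⟫) := this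
      _ = γ * ((⟪c, u⟫:ℝ) - ⟪c, xs⟫) + γ * (1/γ) * ⟪g (xs - p), u - xs⟫ := by ring
      _ = γ * ((⟪c, u⟫:ℝ) - ⟪c, xs⟫) + ⟪g (xs - p), u - xs⟫ := by rw [hγ', one_mul]
  nlinarith [hs, hVI']

/-- Index-shift identity for sums. -/
lemma sum_shift (f : ℕ → ℝ) (hf0 : f 0 = 0) (K : ℕ) :
    ∑ i ∈ Finset.Icc 1 K, f (i - 1) = (∑ i ∈ Finset.Icc 1 K, f i) - f K := by
  induction K with
  | zero => simp [hf0]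
  | succ n ih =>
    rw [Finset.sum_Icc_succ_top (Nat.succ_le_succ (Nat.zero_le n)),
      Finset.sum_Icc_succ_top (Nat.succ_le_succ (Nat.zero_le n)), ih]
    simp

lemma sum_shift_le (f : ℕ → ℝ) (hf0 : f 0 = 0) (hf : ∀ i, 0 ≤ f i) (K : ℕ) :
    ∑ i ∈ Finset.Icc 1 K, f (i - 1) ≤ ∑ i ∈ Finset.Icc 1 K, f i := by
  rw [sum_shift f hf0 K]
  linarith [hf K]

lemma key_ineq (γ α p c c' b : ℝ) (hγ0 : 0 < γ) (hα0 : 0 < α)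
    (hb : b ≤ p + c') (h2 : 0 ≤ c) :
    (1/2 - α*γ/2) * p ^ 2 + (γ/2 - α*γ) * c ^ 2 - α*γ/2 * c' ^ 2
      ≤ 1/2 * p ^ 2 + γ/2 * c ^ 2 - α * γ * b * c := by
  have h4 : b * c ≤ (p + c') * c := mul_le_mul_of_nonneg_right hb h2
  have h5 : (p + c') * c ≤ (p ^ 2 + c ^ 2)/2 + (c' ^ 2 + c ^ 2)/2 := by
    nlinarith [sq_nonneg (p - c), sq_nonneg (c' - c)]
  have h6 : α * γ * (b * c) ≤ α * γ * ((p ^ 2 + c ^ 2)/2 + (c' ^ 2 + c ^ 2)/2) :=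
    mul_le_mul_of_nonneg_left (h4.trans h5) (by positivity)
  linarith [h6]

/-- The central summation bound. -/
lemma sum_bound (K : ℕ) (γ α M : ℝ) (hγ0 : 0 < γ) (hγ1 : γ ≤ 1) (hα0 : 0 < α)
    (hα : α ≤ 1 / 4)
    (pp cc bb : ℕ → ℝ) (hpp : ∀ i, 0 ≤ pp i) (hcc : ∀ i, 0 ≤ cc i)
    (hc0 : cc 0 = 0) (hble : ∀ i, 1 ≤ i → bb i ≤ pp i + cc (i - 1))
    (hM : ∑ i ∈ Finset.Icc 1 K, (1/2 * pp i ^ 2 + γ/2 * cc i ^ 2 - α * γ * bb i * cc i) ≤ M) :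
    ∑ i ∈ Finset.Icc 1 K, (pp i + cc (i - 1)) ^ 2 ≤ 16 * M / γ := by
  have hsum1 : ∑ i ∈ Finset.Icc 1 K,
      ((1/2 - α*γ/2) * pp i ^ 2 + (γ/2 - α*γ) * cc i ^ 2 - α*γ/2 * cc (i-1) ^ 2)
      ≤ ∑ i ∈ Finset.Icc 1 K, (1/2 * pp i ^ 2 + γ/2 * cc i ^ 2 - α * γ * bb i * cc i) := by
    refine Finset.sum_le_sum fun i hi => ?_
    exact key_ineq γ α (pp i) (cc i) (cc (i-1)) (bb i) hγ0 hα0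
      (hble i (Finset.mem_Icc.1 hi).1) (hcc i)
  have hAineq : ∑ i ∈ Finset.Icc 1 K,
      ((1/2 - α*γ/2) * pp i ^ 2 + (γ/2 - α*γ) * cc i ^ 2 - α*γ/2 * cc (i-1) ^ 2) ≤ M :=
    hsum1.trans hM
  -- abbreviate the three sums
  set Sp := ∑ i ∈ Finset.Icc 1 K, pp i ^ 2 with hSp
  set Sc := ∑ i ∈ Finset.Icc 1 K, cc i ^ 2 with hSc
  set Sc' := ∑ i ∈ Finset.Icc 1 K, cc (i-1) ^ 2 with hSc'
  have hsplit : (1/2 - α*γ/2) * Sp + (γ/2 - α*γ) * Sc - α*γ/2 * Sc' ≤ M := by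
    rw [hSp, hSc, hSc', Finset.mul_sum, Finset.mul_sum, Finset.mul_sum,
      ← Finset.sum_add_distrib, ← Finset.sum_sub_distrib]
    exact hAineq
  have hshift : Sc' ≤ Sc :=
    sum_shift_le (fun i => cc i ^ 2) (by simp [hc0]) (fun i => sq_nonneg _) K
  have hSp0 : 0 ≤ Sp := Finset.sum_nonneg fun i _ => sq_nonneg _
  have hSc0 : 0 ≤ Sc := Finset.sum_nonneg fun i _ => sq_nonneg _
  have hSc'0 : 0 ≤ Sc' := Finset.sum_nonneg fun i _ => sq_nonneg _
  have hkey : γ/8 * Sp + γ/8 * Sc ≤ M := by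
    have hαγ : α * γ ≤ 1/4 := by nlinarith
    have hint0 := mul_le_mul_of_nonneg_left hshift (by positivity : (0:ℝ) ≤ α*γ/2)
    have hint1 : 0 ≤ (1/2 - α*γ/2 - γ/8) * Sp :=
      mul_nonneg (by nlinarith) hSp0
    have hint2 : 0 ≤ (γ/2 - 3*(α*γ)/2 - γ/8) * Sc := by
      refine mul_nonneg ?_ hSc0
      nlinarith [mul_nonneg hγ0.le (show (0:ℝ) ≤ 3/8 - 3*α/2 by linarith)]
    nlinarith [hsplit, hint0, hint1, hint2]
  have hfin : ∑ i ∈ Finset.Icc 1 K, (pp i + cc (i - 1)) ^ 2 ≤ 2 * Sp + 2 * Sc' := by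
    rw [hSp, hSc', Finset.mul_sum, Finset.mul_sum, ← Finset.sum_add_distrib]
    refine Finset.sum_le_sum fun i _ => ?_
    nlinarith [sq_nonneg (pp i - cc (i-1))]
  have h8 : Sp + Sc ≤ 8 * M / γ := by
    rw [le_div_iff₀ hγ0]
    linarith [hkey]
  calc ∑ i ∈ Finset.Icc 1 K, (pp i + cc (i - 1)) ^ 2 ≤ 2 * Sp + 2 * Sc' := hfin
    _ ≤ 2 * Sp + 2 * Sc := by linarith
    _ ≤ 16 * M / γ := by
        have h9 : 2*(8*M/γ) = 16*M/γ := by ring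
        linarith [h8, h9]
/-- **Theorem 1, case σ = 0 (a weak solution exists).**
Under the Lipschitz assumption (Assumption 1), the norm assumption (Assumption 2) and
the existence of a weak solution (Assumption 3), the best iterate `w kt` returned by
the OptDE algorithm run with `σ = 0` for `K ≥ 1` iterations satisfies the restricted
strong merit-function bound
`sup{⟪F(w̃_K), w̃_K − v⟫ : v ∈ W, ‖w̃_K − v‖ ≤ D} ≤ C₀ D ‖w₀ − w*‖ √(L / (A_{K−1} + a₁))`
with `C₀ = (1 + δ/(αγ)) √(8α/γ)`. -/
theorem optde_sigma_zero_merit_bound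
    {d : ℕ} (W : Set (Vec d)) (hWne : W.Nonempty) (hWcl : IsClosed W) (hWcv : Convex ℝ W)
    (F : Vec d → Vec d) (nrm : Vec d → ℝ) (g : Vec d → Vec d)
    (L γ δ α : ℝ)
    -- `nrm` is a norm on ℝ^d
    (hnrm_pos : ∀ x : Vec d, x ≠ 0 → 0 < nrm x)
    (hnrm_add : ∀ x y : Vec d, nrm (x + y) ≤ nrm x + nrm y)
    (hnrm_smul : ∀ (c : ℝ) (x : Vec d), nrm (c • x) = |c| * nrm x)
    (hL : 0 < L) (hγ0 : 0 < γ) (hγ1 : γ ≤ 1) (hδ : 0 < δ)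
    -- Assumption 1: F is L-Lipschitz from `nrm` to the dual norm
    (hLip : ∀ v ∈ W, ∀ u ∈ W, dualNorm nrm (F v - F u) ≤ L * nrm (v - u))
    -- Assumption 2: ½ nrm² is differentiable with gradient g, γ-strongly convex,
    -- and its gradient is bounded in dual norm by δ‖·‖
    (hgrad : ∀ x : Vec d, HasGradientAt (fun v : Vec d => nrm v ^ 2 / 2) (g x) x)
    (hstrong : ∀ v x : Vec d,
      nrm v ^ 2 / 2 + ⟪g v, x - v⟫ + γ / 2 * nrm (x - v) ^ 2 ≤ nrm x ^ 2 / 2)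
    (hgbound : ∀ x : Vec d, dualNorm nrm (g x) ≤ δ * nrm x)
    -- Assumption 3: existence of a weak solution w*
    (wstar : Vec d) (hwsW : wstar ∈ W)
    (hweak : ∀ v ∈ W, 0 ≤ (⟪F v, v - wstar⟫ : ℝ))
    -- OptDE algorithm with σ = 0
    (hα0 : 0 < α)
    (hαle : α ≤ min (1 / (4 * Real.sqrt 2)) (Real.sqrt 3 / (4 * Real.sqrt γ)))
    (a A : ℕ → ℝ) (hA0 : A 0 = 0)
    (ha : ∀ k, 1 ≤ k → a k = α * γ / L)
    (hArec : ∀ k, 1 ≤ k → A k = A (k - 1) + a k)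
    (w z : ℕ → Vec d) (hw0W : w 0 ∈ W) (hz0 : z 0 = w 0)
    -- extrapolation step: w_k = P_{z_{k−1}}((α/L) F(w_{k−1}))
    (hwk : ∀ k, 1 ≤ k → w k ∈ W ∧
      IsMinOn (fun x => (⟪(α / L) • F (w (k - 1)), x⟫ : ℝ) +
        1 / (2 * γ) * nrm (x - z (k - 1)) ^ 2) W (w k))
    -- dual averaging step (σ = 0)
    (hzk : ∀ k, 1 ≤ k → z k ∈ W ∧
      IsMinOn (fun x => (⟪∑ i ∈ Finset.Icc 1 k, a i • F (w i), x⟫ : ℝ) +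
        1 / (2 * γ) * nrm (x - w 0) ^ 2) W (z k))
    (K : ℕ) (hK : 1 ≤ K)
    -- the returned best iterate w̃_K = w kt
    (kt : ℕ) (hktmem : kt ∈ Finset.Icc 1 K)
    (hbest : ∀ k ∈ Finset.Icc 1 K,
      nrm (w kt - z (kt - 1)) + nrm (w (kt - 1) - z (kt - 1)) ≤
        nrm (w k - z (k - 1)) + nrm (w (k - 1) - z (k - 1)))
    (D : ℝ) (hD : 0 < D) :
    ∀ v ∈ W, nrm (w kt - v) ≤ D →
      (⟪F (w kt), w kt - v⟫ : ℝ) ≤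
        ((1 + δ / (α * γ)) * Real.sqrt (8 * α / γ)) * D * nrm (w 0 - wstar) *
          Real.sqrt (L / (A (K - 1) + a 1)) := by
  intro v hv hvD
  have hLne : L ≠ 0 := hL.ne'
  -- norm package facts
  have hcs' : ∀ x y : Vec d, (⟪y, x⟫ : ℝ) ≤ nrm x * dualNorm nrm y :=
    fun x y => NP.cs' ⟨nrm, hnrm_pos, hnrm_add, hnrm_smul⟩ x y
  have hdnn : ∀ y : Vec d, 0 ≤ dualNorm nrm y :=
    fun y => NP.dn_nonneg ⟨nrm, hnrm_pos, hnrm_add, hnrm_smul⟩ y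
  have hnn : ∀ x : Vec d, 0 ≤ nrm x :=
    fun x => NP.nonneg ⟨nrm, hnrm_pos, hnrm_add, hnrm_smul⟩ x
  have hn0 : nrm 0 = 0 := NP.zero ⟨nrm, hnrm_pos, hnrm_add, hnrm_smul⟩
  have hsubc : ∀ x y : Vec d, nrm (x - y) = nrm (y - x) :=
    fun x y => NP.sub_comm ⟨nrm, hnrm_pos, hnrm_add, hnrm_smul⟩ x y
  have htri : ∀ x y u : Vec d, nrm (x - u) ≤ nrm (x - y) + nrm (y - u) := by
    intro x y u
    have := hnrm_add (x - y) (y - u)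
    rwa [sub_add_sub_cancel] at this
  -- scalar facts
  have hα4 : α ≤ 1 / 4 := by
    have h1 := (le_min_iff.1 hαle).1
    have hs2 : (1:ℝ) ≤ Real.sqrt 2 := by
      rw [show (1:ℝ) = Real.sqrt 1 by simp]
      exact Real.sqrt_le_sqrt (by norm_num)
    have h2 : 1 / (4 * Real.sqrt 2) ≤ 1 / 4 := by
      apply one_div_le_one_div_of_le (by norm_num)
      nlinarith
    linarith
  have hK0 : (0:ℝ) < (K:ℝ) := by exact_mod_cast hK
  -- memberships
  have hwW : ∀ k, w k ∈ W := by
    intro k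
    cases k with
    | zero => exact hw0W
    | succ n => exact (hwk (n+1) (Nat.succ_le_succ (Nat.zero_le n))).1
  have hzW : ∀ k, z k ∈ W := by
    intro k
    cases k with
    | zero => rw [hz0]; exact hw0W
    | succ n => exact (hzk (n+1) (Nat.succ_le_succ (Nat.zero_le n))).1
  have haI : ∀ i, 1 ≤ i → 0 ≤ a i := fun i hi => by rw [ha i hi]; positivity
  -- inner-product expansion of the dual-averaging vector
  have hsv : ∀ (k : ℕ) (x : Vec d),
      (⟪∑ i ∈ Finset.Icc 1 k, a i • F (w i), x⟫ : ℝ)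
        = ∑ i ∈ Finset.Icc 1 k, a i * ⟪F (w i), x⟫ := by
    intro k x
    rw [sum_inner]
    exact Finset.sum_congr rfl fun i _ => real_inner_smul_left _ _ _
  have hIcc0 : Finset.Icc 1 0 = (∅ : Finset ℕ) := Finset.Icc_eq_empty (by omega)
  -- strong minimality for the extrapolation step
  have hB : ∀ k, 1 ≤ k → ∀ u ∈ W,
      (⟪(α / L) • F (w (k - 1)), w k⟫ : ℝ) + 1 / (2 * γ) * nrm (w k - z (k - 1)) ^ 2
        + 1 / 2 * nrm (u - w k) ^ 2
      ≤ (⟪(α / L) • F (w (k - 1)), u⟫ : ℝ) + 1 / (2 * γ) * nrm (u - z (k - 1)) ^ 2 :=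
    fun k hk u hu => prox_strong_min nrm γ hγ0 g hgrad hstrong W hWcv _ _ _
      (hwk k hk).1 (hwk k hk).2 u hu
  -- strong minimality for the dual-averaging step
  have hDA : ∀ k, 1 ≤ k → ∀ u ∈ W,
      (⟪∑ i ∈ Finset.Icc 1 k, a i • F (w i), z k⟫ : ℝ)
        + 1 / (2 * γ) * nrm (z k - w 0) ^ 2 + 1 / 2 * nrm (u - z k) ^ 2
      ≤ (⟪∑ i ∈ Finset.Icc 1 k, a i • F (w i), u⟫ : ℝ)
        + 1 / (2 * γ) * nrm (u - w 0) ^ 2 :=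
    fun k hk u hu => prox_strong_min nrm γ hγ0 g hgrad hstrong W hWcv _ _ _
      (hzk k hk).1 (hzk k hk).2 u hu
  -- dual-averaging telescoping lower bound
  have hG : ∀ k : ℕ,
      ∑ i ∈ Finset.Icc 1 k, (a i * ⟪F (w i), z i⟫ + 1 / 2 * nrm (z i - z (i - 1)) ^ 2)
        ≤ (⟪∑ i ∈ Finset.Icc 1 k, a i • F (w i), z k⟫ : ℝ)
          + 1 / (2 * γ) * nrm (z k - w 0) ^ 2 := by
    intro k
    induction k with
    | zero => simp [hIcc0, hz0, hn0]
    | succ n ih =>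
      have h1n : (1:ℕ) ≤ n + 1 := Nat.succ_le_succ (Nat.zero_le n)
      rw [Finset.sum_Icc_succ_top h1n, Finset.sum_Icc_succ_top h1n, inner_add_left,
        real_inner_smul_left]
      simp only [Nat.add_sub_cancel]
      have hstep : (⟪∑ i ∈ Finset.Icc 1 n, a i • F (w i), z n⟫ : ℝ)
          + 1 / (2 * γ) * nrm (z n - w 0) ^ 2 + 1 / 2 * nrm (z (n+1) - z n) ^ 2
          ≤ (⟪∑ i ∈ Finset.Icc 1 n, a i • F (w i), z (n+1)⟫ : ℝ)
            + 1 / (2 * γ) * nrm (z (n+1) - w 0) ^ 2 := by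
        cases n with
        | zero =>
          have hx : 0 ≤ nrm (z (0+1) - w 0) ^ 2 := sq_nonneg _
          have hhalf : (1:ℝ) / 2 ≤ 1 / (2 * γ) := by
            rw [div_le_div_iff₀ (by norm_num) (by positivity)]
            nlinarith
          simp only [hIcc0, Finset.sum_empty, inner_zero_left, hz0, sub_self, hn0]
          nlinarith [mul_le_mul_of_nonneg_right hhalf hx]
        | succ m =>
          exact hDA (m+1) (Nat.succ_le_succ (Nat.zero_le m)) (z (m+2)) (hzW (m+2))
      linarith [ih, hstep]
  -- combining with the weak solution at `u = wstar`
  have hstar : ∑ i ∈ Finset.Icc 1 K,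
      (a i * ⟪F (w i), z i⟫ + 1 / 2 * nrm (z i - z (i - 1)) ^ 2)
      ≤ (∑ i ∈ Finset.Icc 1 K, a i * ⟪F (w i), wstar⟫)
        + 1 / (2 * γ) * nrm (wstar - w 0) ^ 2 := by
    have h1 := hDA K hK wstar hwsW
    have h2 := hG K
    rw [hsv K wstar] at h1
    nlinarith [sq_nonneg (nrm (wstar - z K))]
  -- the per-step descent inequality for the extrapolation step
  have hdiamond : ∀ i, 1 ≤ i →
      a i * ⟪F (w i), w i - z i⟫ ≤
        α * γ * nrm (w i - w (i - 1)) * nrm (w i - z i)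
        + 1 / 2 * nrm (z i - z (i - 1)) ^ 2 - 1 / 2 * nrm (w i - z (i - 1)) ^ 2
        - γ / 2 * nrm (w i - z i) ^ 2 := by
    intro i hi
    have h1 := hB i hi (z i) (hzW i)
    rw [real_inner_smul_left, real_inner_smul_left] at h1
    -- multiply the prox estimate by γ
    have h2 : γ * (α / L * ⟪F (w (i-1)), w i⟫ - α / L * ⟪F (w (i-1)), z i⟫)
        ≤ γ * (1 / (2 * γ) * nrm (z i - z (i - 1)) ^ 2
          - 1 / (2 * γ) * nrm (w i - z (i - 1)) ^ 2 - 1 / 2 * nrm (z i - w i) ^ 2) :=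
      mul_le_mul_of_nonneg_left (by linarith) hγ0.le
    have hg1 : γ * (1 / (2 * γ)) = 1 / 2 := by field_simp
    have e2 : γ * (1 / (2 * γ) * nrm (z i - z (i - 1)) ^ 2
          - 1 / (2 * γ) * nrm (w i - z (i - 1)) ^ 2 - 1 / 2 * nrm (z i - w i) ^ 2)
        = 1 / 2 * nrm (z i - z (i - 1)) ^ 2 - 1 / 2 * nrm (w i - z (i - 1)) ^ 2
          - γ / 2 * nrm (z i - w i) ^ 2 := by
      field_simp
    rw [e2, hsubc (z i) (w i)] at h2
    -- split F (w i) = (F (w i) - F (w (i-1))) + F (w (i-1))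
    have hsplit : a i * ⟪F (w i), w i - z i⟫
        = a i * ⟪F (w i) - F (w (i-1)), w i - z i⟫
          + γ * (α / L * ⟪F (w (i-1)), w i⟫ - α / L * ⟪F (w (i-1)), z i⟫) := by
      rw [ha i hi]
      simp only [inner_sub_left, inner_sub_right]
      ring
    have hlipterm : a i * ⟪F (w i) - F (w (i-1)), w i - z i⟫
        ≤ α * γ * nrm (w i - w (i - 1)) * nrm (w i - z i) := by
      have hA1 : (⟪F (w i) - F (w (i-1)), w i - z i⟫ : ℝ)
          ≤ nrm (w i - z i) * dualNorm nrm (F (w i) - F (w (i-1))) := hcs' _ _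
      have hA2 : dualNorm nrm (F (w i) - F (w (i-1))) ≤ L * nrm (w i - w (i-1)) :=
        hLip (w i) (hwW i) (w (i-1)) (hwW (i-1))
      have hA3 : (⟪F (w i) - F (w (i-1)), w i - z i⟫ : ℝ)
          ≤ nrm (w i - z i) * (L * nrm (w i - w (i-1))) :=
        hA1.trans (mul_le_mul_of_nonneg_left hA2 (hnn _))
      have hA4 := mul_le_mul_of_nonneg_left hA3 (haI i hi)
      rw [ha i hi] at hA4 ⊢
      calc α * γ / L * ⟪F (w i) - F (w (i-1)), w i - z i⟫
          ≤ α * γ / L * (nrm (w i - z i) * (L * nrm (w i - w (i-1)))) := hA4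
        _ = α * γ * nrm (w i - w (i - 1)) * nrm (w i - z i) :=
            helper1 (α * γ) L (nrm (w i - w (i - 1))) (nrm (w i - z i)) hLne
    linarith [hsplit, hlipterm, h2]
  -- the master sum inequality, fed into `sum_bound`
  have hM : ∑ i ∈ Finset.Icc 1 K,
      (1/2 * nrm (w i - z (i-1)) ^ 2 + γ/2 * nrm (w i - z i) ^ 2
        - α * γ * nrm (w i - w (i-1)) * nrm (w i - z i))
      ≤ 1 / (2 * γ) * nrm (wstar - w 0) ^ 2 := by
    have hsum2 : ∑ i ∈ Finset.Icc 1 K,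
        (1/2 * nrm (w i - z (i-1)) ^ 2 + γ/2 * nrm (w i - z i) ^ 2
          - α * γ * nrm (w i - w (i-1)) * nrm (w i - z i))
        ≤ ∑ i ∈ Finset.Icc 1 K,
          ((a i * ⟪F (w i), z i⟫ + 1 / 2 * nrm (z i - z (i - 1)) ^ 2)
            - a i * ⟪F (w i), wstar⟫) := by
      refine Finset.sum_le_sum fun i hi => ?_
      have hi1 : 1 ≤ i := (Finset.mem_Icc.1 hi).1
      have hd := hdiamond i hi1
      have hw' : 0 ≤ a i * ⟪F (w i), w i - wstar⟫ :=
        mul_nonneg (haI i hi1) (hweak (w i) (hwW i))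
      have hinner : (⟪F (w i), z i⟫ : ℝ) - ⟪F (w i), wstar⟫
          = ⟪F (w i), w i - wstar⟫ - ⟪F (w i), w i - z i⟫ := by
        rw [inner_sub_right, inner_sub_right]; ring
      have hws : a i * ⟪F (w i), z i⟫ - a i * ⟪F (w i), wstar⟫
          = a i * ⟪F (w i), w i - wstar⟫ - a i * ⟪F (w i), w i - z i⟫ := by
        rw [← mul_sub, hinner]; ring
      nlinarith [hd, hw', hws]
    have hsplitsum : ∑ i ∈ Finset.Icc 1 K,
        ((a i * ⟪F (w i), z i⟫ + 1 / 2 * nrm (z i - z (i - 1)) ^ 2)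
          - a i * ⟪F (w i), wstar⟫)
        = ∑ i ∈ Finset.Icc 1 K, (a i * ⟪F (w i), z i⟫ + 1 / 2 * nrm (z i - z (i - 1)) ^ 2)
          - ∑ i ∈ Finset.Icc 1 K, a i * ⟪F (w i), wstar⟫ := Finset.sum_sub_distrib _ _
    linarith [hstar, hsum2, hsplitsum]
  -- apply the summation bound
  have hc0 : nrm (w 0 - z 0) = 0 := by rw [hz0, sub_self, hn0]
  have hPQ := sum_bound K γ α (1 / (2 * γ) * nrm (wstar - w 0) ^ 2) hγ0 hγ1 hα0 hα4
    (fun i => nrm (w i - z (i-1))) (fun j => nrm (w j - z j)) (fun i => nrm (w i - w (i-1)))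
    (fun i => hnn _) (fun i => hnn _) hc0
    (fun i hi => by
      have h := htri (w i) (z (i-1)) (w (i-1))
      rwa [hsubc (z (i-1)) (w (i-1))] at h)
    hM
  -- best-iterate bound
  have hkt1 : 1 ≤ kt := (Finset.mem_Icc.1 hktmem).1
  obtain ⟨rkt, hrkt⟩ : ∃ r : ℝ, r = nrm (w kt - z (kt - 1)) + nrm (w (kt - 1) - z (kt - 1)) :=
    ⟨_, rfl⟩
  have hrkt0 : 0 ≤ rkt := by rw [hrkt]; exact add_nonneg (hnn _) (hnn _)
  have hKr : (K:ℝ) * rkt ^ 2 ≤ 8 * nrm (wstar - w 0) ^ 2 / γ ^ 2 := by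
    have h1 : (K:ℝ) * rkt ^ 2 = ∑ i ∈ Finset.Icc 1 K, rkt ^ 2 := by
      rw [Finset.sum_const, Nat.card_Icc]
      simp [nsmul_eq_mul]
    have h2 : ∑ i ∈ Finset.Icc 1 K, rkt ^ 2
        ≤ ∑ i ∈ Finset.Icc 1 K,
          (nrm (w i - z (i-1)) + nrm (w (i-1) - z (i-1))) ^ 2 :=
      Finset.sum_le_sum fun i hi =>
        pow_le_pow_left₀ hrkt0 (by rw [hrkt]; exact hbest i hi) 2
    have h3 : ∑ i ∈ Finset.Icc 1 K,
          (nrm (w i - z (i-1)) + nrm (w (i-1) - z (i-1))) ^ 2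
        ≤ 16 * (1 / (2 * γ) * nrm (wstar - w 0) ^ 2) / γ := hPQ
    have h4 : 16 * (1 / (2 * γ) * nrm (wstar - w 0) ^ 2) / γ
        = 8 * nrm (wstar - w 0) ^ 2 / γ ^ 2 := by
      field_simp
      ring
    rw [h1]
    exact le_of_le_of_eq (h2.trans h3) h4
  -- the merit bound at the best iterate
  have h1δ : (0:ℝ) ≤ 1 + δ / (α * γ) := by
    have : 0 < δ / (α * γ) := div_pos hδ (mul_pos hα0 hγ0)
    linarith
  have hmerit : (⟪F (w kt), w kt - v⟫ : ℝ) ≤ L * D * (1 + δ / (α * γ)) * rkt := by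
    have hsplitF : (⟪F (w kt), w kt - v⟫ : ℝ)
        = ⟪F (w kt) - F (w (kt-1)), w kt - v⟫ + ⟪F (w (kt-1)), w kt - v⟫ := by
      rw [inner_sub_left]; ring
    have ht1 : (⟪F (w kt) - F (w (kt-1)), w kt - v⟫ : ℝ)
        ≤ D * (L * nrm (w kt - w (kt-1))) := by
      calc (⟪F (w kt) - F (w (kt-1)), w kt - v⟫ : ℝ)
          ≤ nrm (w kt - v) * dualNorm nrm (F (w kt) - F (w (kt-1))) := hcs' _ _
        _ ≤ D * (L * nrm (w kt - w (kt-1))) :=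
            mul_le_mul hvD (hLip _ (hwW kt) _ (hwW (kt-1))) (hdnn _) hD.le
    have hVI := grad_VI nrm γ g hgrad W hWcv ((α / L) • F (w (kt-1))) (z (kt-1)) (w kt)
      (hwk kt hkt1).1 (hwk kt hkt1).2 v hv
    rw [real_inner_smul_left] at hVI
    have hneg : (⟪F (w (kt-1)), v - w kt⟫ : ℝ) = -⟪F (w (kt-1)), w kt - v⟫ := by
      rw [← inner_neg_right, neg_sub]
    have hgb : (⟪g (w kt - z (kt-1)), v - w kt⟫ : ℝ)
        ≤ D * (δ * nrm (w kt - z (kt-1))) := by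
      calc (⟪g (w kt - z (kt-1)), v - w kt⟫ : ℝ)
          ≤ nrm (v - w kt) * dualNorm nrm (g (w kt - z (kt-1))) := hcs' _ _
        _ ≤ D * (δ * nrm (w kt - z (kt-1))) := by
            refine mul_le_mul ?_ (hgbound _) (hdnn _) hD.le
            rw [hsubc]; exact hvD
    have hγinv : (0:ℝ) ≤ 1 / γ := (one_div_pos.2 hγ0).le
    have ht2 : α / L * ⟪F (w (kt-1)), w kt - v⟫
        ≤ 1 / γ * (D * (δ * nrm (w kt - z (kt-1)))) := by
      rw [hneg] at hVI
      have := mul_le_mul_of_nonneg_left hgb hγinv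
      linarith
    have ht2' : (⟪F (w (kt-1)), w kt - v⟫ : ℝ)
        ≤ L / α * (1 / γ * (D * (δ * nrm (w kt - z (kt-1))))) := by
      have hLα : (0:ℝ) ≤ L / α := (div_pos hL hα0).le
      have h5 := mul_le_mul_of_nonneg_left ht2 hLα
      calc (⟪F (w (kt-1)), w kt - v⟫ : ℝ)
          = L / α * (α / L * ⟪F (w (kt-1)), w kt - v⟫) := by field_simp
        _ ≤ L / α * (1 / γ * (D * (δ * nrm (w kt - z (kt-1))))) := h5
    have hble' : nrm (w kt - w (kt-1)) ≤ rkt := by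
      have h := htri (w kt) (z (kt-1)) (w (kt-1))
      rw [hsubc (z (kt-1)) (w (kt-1))] at h
      rw [hrkt]
      exact h
    have hple : nrm (w kt - z (kt-1)) ≤ rkt := by
      rw [hrkt]; linarith [hnn (w (kt-1) - z (kt-1))]
    have hstep1 : D * (L * nrm (w kt - w (kt-1))) ≤ D * (L * rkt) :=
      mul_le_mul_of_nonneg_left (mul_le_mul_of_nonneg_left hble' hL.le) hD.le
    have hstep2 : L / α * (1 / γ * (D * (δ * nrm (w kt - z (kt-1)))))
        ≤ L / α * (1 / γ * (D * (δ * rkt))) := by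
      refine mul_le_mul_of_nonneg_left ?_ (div_pos hL hα0).le
      refine mul_le_mul_of_nonneg_left ?_ hγinv
      exact mul_le_mul_of_nonneg_left (mul_le_mul_of_nonneg_left hple hδ.le) hD.le
    have hend : D * (L * rkt) + L / α * (1 / γ * (D * (δ * rkt)))
        = L * D * (1 + δ / (α * γ)) * rkt := by
      field_simp
    linarith [hsplitF, ht1, ht2', hstep1, hstep2, hend]
  -- numeric endgame
  have hAk : ∀ k : ℕ, A k = k * (α * γ / L) := by
    intro k
    induction k with
    | zero => simp [hA0]
    | succ n ih =>
      rw [hArec (n+1) (Nat.succ_le_succ (Nat.zero_le n))]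
      simp only [Nat.add_sub_cancel]
      rw [ih, ha (n+1) (Nat.succ_le_succ (Nat.zero_le n))]
      push_cast
      ring
  have hAa : A (K-1) + a 1 = K * (α * γ / L) := by
    rw [hAk (K-1), ha 1 le_rfl]
    have hcast : ((K-1 : ℕ):ℝ) = (K:ℝ) - 1 := by
      rw [Nat.cast_sub hK]; simp
    rw [hcast]; ring
  have hKne : (K:ℝ) ≠ 0 := hK0.ne'
  have hsqrtmerge : Real.sqrt (8 * α / γ) * Real.sqrt (L / (A (K-1) + a 1))
      = Real.sqrt (8 * L ^ 2 / (γ ^ 2 * K)) := by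
    rw [hAa, ← Real.sqrt_mul (by positivity)]
    congr 1
    field_simp
  have hLr : L * rkt ≤ nrm (wstar - w 0) * Real.sqrt (8 * L ^ 2 / (γ ^ 2 * K)) := by
    have hx0 : 0 ≤ L * rkt := mul_nonneg hL.le hrkt0
    have hKr' : (K:ℝ) * rkt ^ 2 * γ ^ 2 ≤ 8 * nrm (wstar - w 0) ^ 2 :=
      (le_div_iff₀ (by positivity)).1 hKr
    have h1 : (L * rkt) ^ 2 ≤ nrm (wstar - w 0) ^ 2 * (8 * L ^ 2 / (γ ^ 2 * K)) := by
      rw [mul_div_assoc', le_div_iff₀ (by positivity)]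
      nlinarith [mul_le_mul_of_nonneg_left hKr' (sq_nonneg L)]
    calc L * rkt = Real.sqrt ((L * rkt) ^ 2) := (Real.sqrt_sq hx0).symm
      _ ≤ Real.sqrt (nrm (wstar - w 0) ^ 2 * (8 * L ^ 2 / (γ ^ 2 * K))) :=
          Real.sqrt_le_sqrt h1
      _ = nrm (wstar - w 0) * Real.sqrt (8 * L ^ 2 / (γ ^ 2 * K)) := by
          rw [Real.sqrt_mul (sq_nonneg _), Real.sqrt_sq (hnn _)]
  have hRw : nrm (w 0 - wstar) = nrm (wstar - w 0) := hsubc _ _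
  calc (⟪F (w kt), w kt - v⟫ : ℝ) ≤ L * D * (1 + δ / (α * γ)) * rkt := hmerit
    _ = D * (1 + δ / (α * γ)) * (L * rkt) := by ring
    _ ≤ D * (1 + δ / (α * γ))
        * (nrm (wstar - w 0) * Real.sqrt (8 * L ^ 2 / (γ ^ 2 * K))) := by
        exact mul_le_mul_of_nonneg_left hLr (mul_nonneg hD.le h1δ)
    _ = ((1 + δ / (α * γ)) * Real.sqrt (8 * α / γ)) * D * nrm (w 0 - wstar) *
          Real.sqrt (L / (A (K - 1) + a 1)) := by
        rw [hRw, ← hsqrtmerge]; ring
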